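/- Let D be a finitely generated abelian group and S a periodic D-graded commutative ring, i.e., the set D' = {deg(u) : u ∈ S^× homogeneous} of degrees of homogeneous units is a subgroup of finite index in D. Then there exists a free abelian subgroup F ≤ D of finite index in D such that the Veronese subring S_F = ⊕_{d∈F} S_d is isomorphic as an S_0-algebra to the group algebra S_0[F] (a Laurent polynomial algebra S_0[T_1^{±1},…,T_r^{±1}] in r = rank(D) variables), by an isomorphism carrying S_d onto S_0·χ^d for each d ∈ F. -/

import Mathlib

lemma aux_exists_free_subgroup {D : Type*} [AddCommGroup D] [AddGroup.FG D]
    (D' : AddSubgroup D) (hfi : D'.FiniteIndex) :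
    ∃ F : AddSubgroup D, F ≤ D' ∧ F.FiniteIndex ∧ Module.Free ℤ F := by
  classical
  haveI := hfi
  haveI : Module.Finite ℤ D := Module.Finite.iff_addGroup_fg.mpr ‹_›
  haveI : IsNoetherian ℤ D := isNoetherian_of_isNoetherianRing_of_finite ℤ D
  set T := Submodule.torsion ℤ D with hT
  haveI : Module.Finite ℤ T := Module.Finite.iff_fg.mpr (IsNoetherian.noetherian T)
  haveI : Finite T := Module.finite_of_fg_torsion T (Submodule.torsion_isTorsion (R:=ℤ) (M:=D))
  set e : ℕ := Nat.card T with he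
  have he0 : e ≠ 0 := Nat.card_ne_zero.mpr ⟨⟨⟨0, Submodule.zero_mem T⟩⟩, inferInstance⟩
  have hekill : ∀ x : D, x ∈ T → e • x = 0 := by
    intro x hx
    have : e • (⟨x, hx⟩ : T) = 0 := card_nsmul_eq_zero'
    simpa using congrArg (Subtype.val) this
  set m : ℕ := D'.index with hm
  have hm0 : m ≠ 0 := hfi.index_ne_zero
  have hn0 : e * m ≠ 0 := mul_ne_zero he0 hm0
  set f : D →+ D := AddMonoidHom.mk' (fun x => ((e * m : ℕ) : ℤ) • x) (fun a b => smul_add _ a b) with hf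
  have hfle : f.range ≤ D' := by
    rintro x ⟨y, rfl⟩
    have h1 : m • y ∈ D' := D'.nsmul_index_mem y
    have h2 : f y = e • (m • y) := by
      show ((e * m : ℕ) : ℤ) • y = e • (m • y)
      rw [Nat.cast_smul_eq_nsmul, smul_smul]
    rw [h2]
    exact D'.nsmul_mem h1 e
  haveI : Finite (D ⧸ f.range) := by
    apply AddCommGroup.finite_of_fg_torsion
    intro x
    induction x using QuotientAddGroup.induction_on with
    | H y =>
      refine isOfFinAddOrder_iff_nsmul_eq_zero.mpr ⟨e * m, Nat.pos_of_ne_zero hn0, ?_⟩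
      rw [← QuotientAddGroup.mk_nsmul, QuotientAddGroup.eq_zero_iff]
      exact ⟨y, by show ((e * m : ℕ) : ℤ) • y = (e * m) • y; rw [Nat.cast_smul_eq_nsmul]⟩
  haveI : f.range.FiniteIndex := AddSubgroup.finiteIndex_of_finite_quotient
  haveI : NoZeroSMulDivisors ℤ f.range := by
    constructor
    intro c x h
    rcases eq_or_ne c 0 with hc | hc
    · exact Or.inl hc
    right
    obtain ⟨y, hy⟩ := x.2
    have hx : c • (x : D) = 0 := by
      have := congrArg (Subtype.val) h
      simpa using this
    have hyT : y ∈ T := by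
      refine ⟨⟨c * (e * m : ℕ), mul_mem_nonZeroDivisors.mpr ⟨mem_nonZeroDivisors_of_ne_zero hc,
        mem_nonZeroDivisors_of_ne_zero (by exact_mod_cast hn0)⟩⟩, ?_⟩
      show (c * ((e * m : ℕ) : ℤ)) • y = 0
      rw [mul_smul]
      have hy' : ((e * m : ℕ) : ℤ) • y = (x : D) := hy
      rw [hy', hx]
    have hey : e • y = 0 := hekill y hyT
    have : (x : D) = 0 := by
      rw [← hy]
      show ((e * m : ℕ) : ℤ) • y = 0
      rw [Nat.cast_smul_eq_nsmul, mul_comm, mul_smul, hey, smul_zero]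
    exact Subtype.ext this
  haveI : Module.Finite ℤ f.range := by
    have : (AddSubgroup.toIntSubmodule f.range).FG := IsNoetherian.noetherian _
    exact Module.Finite.iff_fg.mpr this
  exact ⟨f.range, hfle, ‹_›, Module.free_of_finite_type_torsion_free'⟩


lemma aux_units_inv_mem_neg {D S : Type*} [AddCommGroup D] [DecidableEq D] [CommRing S]
    (𝒜 : D → AddSubgroup S) [GradedRing 𝒜] {d : D} (u : Sˣ) (hu : (u : S) ∈ 𝒜 d) :
    ((u⁻¹ : Sˣ) : S) ∈ 𝒜 (-d) := by
  set v : S := ((u⁻¹ : Sˣ) : S) with hv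
  have hw : ((DirectSum.decompose 𝒜 v (-d) : 𝒜 (-d)) : S) ∈ 𝒜 (-d) := SetLike.coe_mem _
  set w : S := ((DirectSum.decompose 𝒜 v (-d) : 𝒜 (-d)) : S) with hwdef
  have huv : (u : S) * v = 1 := u.mul_inv
  have key : (u : S) * w = 1 := by
    have h1 := DirectSum.coe_decompose_mul_add_of_left_mem 𝒜 (b := v) (j := -d) hu
    rw [huv] at h1
    rw [add_neg_cancel] at h1
    rw [DirectSum.decompose_of_mem_same 𝒜 SetLike.GradedOne.one_mem] at h1
    exact h1.symm
  have hvw : v = w := by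
    calc v = v * ((u : S) * w) := by rw [key, mul_one]
    _ = ((u : S) * v) * w := by ring
    _ = w := by rw [huv, one_mul]
  show v ∈ 𝒜 (-d)
  rw [hvw]
  exact hw



/-- The Veronese subring `S_H = ⊕_{d ∈ H} S_d` of a `D`-graded ring `S` with respect to a
subgroup `H ≤ D`: the subring generated by the homogeneous elements whose degree lies in `H`. -/
def veroneseSubring {D S : Type*} [AddCommGroup D] [CommRing S]
    (𝒜 : D → AddSubgroup S) (H : AddSubgroup D) : Subring S :=
  Subring.closure (⋃ d ∈ H, (𝒜 d : Set S))

/-- Let `S` be a periodic `D`-graded commutative ring, i.e. the set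
`D' = {deg u : u a homogeneous unit}` is a subgroup of finite index in `D`.  Then there is a
free abelian subgroup `F ≤ D` of finite index such that the Veronese subring
`S_F = ⊕_{d ∈ F} S_d` is isomorphic, as an `S_0`-algebra, to the group algebra `S_0[F]`
(a Laurent polynomial algebra in `rank D` variables), by an isomorphism carrying `S_d` onto
`S_0 · χ^d` for each `d ∈ F`. -/
theorem stmt_8 {D S : Type*} [AddCommGroup D] [AddGroup.FG D] [DecidableEq D] [CommRing S]
    (𝒜 : D → AddSubgroup S) [GradedRing 𝒜]
    (hper : ∃ D' : AddSubgroup D,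
      (D' : Set D) = {d : D | ∃ u : Sˣ, (u : S) ∈ 𝒜 d} ∧ D'.FiniteIndex) :
    ∃ F : AddSubgroup D, F.FiniteIndex ∧ Module.Free ℤ F ∧
      ∃ e : veroneseSubring 𝒜 F ≃+* AddMonoidAlgebra (𝒜 0) F,
        (∀ (a : 𝒜 0) (ha : (a : S) ∈ veroneseSubring 𝒜 F),
            e ⟨(a : S), ha⟩ = AddMonoidAlgebra.single (0 : F) a) ∧
        ∀ (d : D) (hd : d ∈ F) (s : veroneseSubring 𝒜 F),
          (s : S) ∈ 𝒜 d ↔ ∃ a : 𝒜 0, e s = AddMonoidAlgebra.single (⟨d, hd⟩ : F) a := by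
  classical
  obtain ⟨D', hD'eq, hD'fin⟩ := hper
  obtain ⟨F, hFle, hFfin, hFfree⟩ := aux_exists_free_subgroup D' hD'fin
  have hunit : ∀ z : F, ∃ u : Sˣ, (u : S) ∈ 𝒜 (z : D) := by
    intro z
    have h1 : (z : D) ∈ (D' : Set D) := hFle z.2
    rw [hD'eq] at h1
    exact h1
  haveI := hFfree
  let b := Module.Free.chooseBasis ℤ F
  choose u0 hu0 using fun i => hunit (b i)
  let φ : F →ₗ[ℤ] Additive Sˣ := b.constr ℤ (fun i => Additive.ofMul (u0 i))
  let u : F → Sˣ := fun z => Additive.toMul (φ z)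
  have humul : ∀ y z : F, u (y + z) = u y * u z := fun y z => by
    show Additive.toMul (φ (y + z)) = _
    rw [map_add]; rfl
  have huzero : u 0 = 1 := by show Additive.toMul (φ 0) = 1; rw [map_zero]; rfl
  have huneg : ∀ z : F, u (-z) = (u z)⁻¹ := fun z => by
    show Additive.toMul (φ (-z)) = _; rw [map_neg]; rfl
  have hub : ∀ i, u (b i) = u0 i := fun i => by
    show Additive.toMul (φ (b i)) = u0 i
    rw [Module.Basis.constr_basis]; rfl
  have humem : ∀ z : F, ((u z : Sˣ) : S) ∈ 𝒜 (z : D) := by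
    let G : AddSubgroup F :=
    { carrier := {z : F | ((u z : Sˣ) : S) ∈ 𝒜 (z : D)}
      zero_mem' := by
        show ((u 0 : Sˣ) : S) ∈ 𝒜 ((0 : F) : D)
        rw [huzero]
        simpa using SetLike.GradedOne.one_mem (A := 𝒜)
      add_mem' := by
        intro y z hy hz
        show ((u (y + z) : Sˣ) : S) ∈ 𝒜 ((y + z : F) : D)
        rw [humul, Units.val_mul]
        exact SetLike.mul_mem_graded hy hz
      neg_mem' := by
        intro z hz
        show ((u (-z) : Sˣ) : S) ∈ 𝒜 ((-z : F) : D)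
        rw [huneg]
        simpa using aux_units_inv_mem_neg 𝒜 (u z) hz }
    have hsub : ∀ z : F, z ∈ G := by
      intro z
      have hz : z ∈ Submodule.span ℤ (Set.range ⇑b) := by rw [b.span_eq]; exact Submodule.mem_top
      refine Submodule.span_induction (p := fun w _ => w ∈ G) ?_ ?_ ?_ ?_ hz
      · rintro x ⟨i, rfl⟩
        show ((u (b i) : Sˣ) : S) ∈ 𝒜 ((b i : F) : D)
        rw [hub]
        exact hu0 i
      · exact G.zero_mem
      · intro x y _ _ hx hy; exact G.add_mem hx hy
      · intro c x _ hx; exact G.zsmul_mem hx c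
    exact fun z => hsub z
  have hmem0 : ∀ a : (𝒜 0), (a : S) ∈ veroneseSubring 𝒜 F :=
    fun a => Subring.subset_closure (Set.mem_biUnion F.zero_mem a.2)
  have hmemu : ∀ z : F, ((u z : Sˣ) : S) ∈ veroneseSubring 𝒜 F :=
    fun z => Subring.subset_closure (Set.mem_biUnion z.2 (humem z))
  let incl0 : (𝒜 0) →+* veroneseSubring 𝒜 F :=
  { toFun := fun a => ⟨(a : S), hmem0 a⟩
    map_one' := rfl
    map_mul' := fun a b => rfl
    map_zero' := rfl
    map_add' := fun a b => rfl }
  let gU : Multiplicative F →* veroneseSubring 𝒜 F :=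
  { toFun := fun z => ⟨((u z.toAdd : Sˣ) : S), hmemu z.toAdd⟩
    map_one' := by
      apply Subtype.ext
      show ((u ((1 : Multiplicative F).toAdd) : Sˣ) : S) = 1
      rw [show (1 : Multiplicative F).toAdd = (0 : F) from rfl, huzero, Units.val_one]
    map_mul' := fun y z => by
      apply Subtype.ext
      show ((u ((y * z).toAdd) : Sˣ) : S) = _
      rw [show (y * z).toAdd = y.toAdd + z.toAdd from rfl, humul, Units.val_mul]
      rfl }
  let ψ : AddMonoidAlgebra (𝒜 0) F →+* veroneseSubring 𝒜 F :=
    AddMonoidAlgebra.liftNCRingHom incl0 gU (fun _ _ => Commute.all _ _)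
  have hψs : ∀ (z : F) (a : (𝒜 0)),
      ((ψ (AddMonoidAlgebra.single z a) : veroneseSubring 𝒜 F) : S)
        = (a : S) * ((u z : Sˣ) : S) := by
    intro z a
    have h1 : ψ (AddMonoidAlgebra.single z a)
        = incl0 a * gU (Multiplicative.ofAdd z) := by
      simp [ψ, AddMonoidAlgebra.liftNCRingHom]
    rw [h1]
    rfl
  have hsum : ∀ x : AddMonoidAlgebra (𝒜 0) F,
      ((ψ x : veroneseSubring 𝒜 F) : S)
        = ∑ z ∈ x.coeff.support, ((x.coeff z : S) * ((u z : Sˣ) : S)) := by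
    intro x
    have h2 : ψ x = ∑ z ∈ x.coeff.support, ψ (AddMonoidAlgebra.single z (x.coeff z)) := by
      conv_lhs => rw [← AddMonoidAlgebra.sum_coeff_single x]
      rw [map_finsuppSum]
      rfl
    rw [h2, AddSubmonoidClass.coe_finset_sum]
    exact Finset.sum_congr rfl fun z _ => hψs z (x.coeff z)
  have hterm : ∀ (x : AddMonoidAlgebra (𝒜 0) F) (z : F),
      ((x.coeff z : S) * ((u z : Sˣ) : S)) ∈ 𝒜 (z : D) := fun x z => by
    have h3 := SetLike.mul_mem_graded (x.coeff z).2 (humem z)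
    rwa [zero_add] at h3
  have hinj : Function.Injective ψ := by
    rw [injective_iff_map_eq_zero]
    intro x hx
    refine AddMonoidAlgebra.ext (Finsupp.ext fun z => ?_)
    by_contra hz0
    have hzs : z ∈ x.coeff.support := Finsupp.mem_support_iff.mpr hz0
    have h0 : (0 : S) = ∑ zz ∈ x.coeff.support, ((x.coeff zz : S) * ((u zz : Sˣ) : S)) := by
      rw [← hsum x, hx]
      rfl
    have h1 := congrArg (fun s => ((DirectSum.decompose 𝒜 s (z : D) : 𝒜 (z : D)) : S)) h0
    simp only [DirectSum.decompose_zero, DirectSum.zero_apply, ZeroMemClass.coe_zero] at h1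
    have h2 : (((DirectSum.decompose 𝒜
          (∑ zz ∈ x.coeff.support, ((x.coeff zz : S) * ((u zz : Sˣ) : S))) (z : D)) : 𝒜 (z : D)) : S)
        = (x.coeff z : S) * ((u z : Sˣ) : S) := by
      rw [DirectSum.decompose_sum]
      rw [DFinsupp.finset_sum_apply, AddSubmonoidClass.coe_finset_sum]
      rw [Finset.sum_eq_single_of_mem z hzs]
      · exact DirectSum.decompose_of_mem_same 𝒜 (hterm x z)
      · intro zz _ hne
        exact DirectSum.decompose_of_mem_ne 𝒜 (hterm x zz) (by exact_mod_cast Subtype.coe_injective.ne hne)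
    rw [h2] at h1
    have h4 : (x.coeff z : S) = 0 := by
      have h5 := h1.symm
      rwa [mul_comm, Units.mul_right_eq_zero] at h5
    exact hz0 (Subtype.ext h4)
  have hsurj : Function.Surjective ψ := by
    have hle : veroneseSubring 𝒜 F ≤
        (ψ.range.map (veroneseSubring 𝒜 F).subtype) := by
      apply Subring.closure_le.mpr
      rintro t ht
      simp only [Set.mem_iUnion] at ht
      obtain ⟨d, hdF, ht⟩ := ht
      set z : F := ⟨d, hdF⟩ with hzdef
      have hainv : (((u z)⁻¹ : Sˣ) : S) ∈ 𝒜 (-d) :=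
        aux_units_inv_mem_neg 𝒜 (u z) (humem z)
      have ha : t * (((u z)⁻¹ : Sˣ) : S) ∈ 𝒜 0 := by
        have h6 := SetLike.mul_mem_graded ht hainv
        rwa [add_neg_cancel] at h6
      refine ⟨ψ (AddMonoidAlgebra.single z ⟨_, ha⟩), ⟨_, rfl⟩, ?_⟩
      show ((ψ (AddMonoidAlgebra.single z ⟨t * (((u z)⁻¹ : Sˣ) : S), ha⟩)
          : veroneseSubring 𝒜 F) : S) = t
      rw [hψs]
      show (t * (((u z)⁻¹ : Sˣ) : S)) * ((u z : Sˣ) : S) = t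
      rw [mul_assoc, Units.inv_mul, mul_one]
    intro s
    obtain ⟨y, hy, hyv⟩ := hle s.2
    obtain ⟨x, hx⟩ := hy
    exact ⟨x, by rw [hx]; exact Subtype.ext hyv⟩
  let E := RingEquiv.ofBijective ψ ⟨hinj, hsurj⟩
  have hEapp : ∀ x, E x = ψ x := fun x => rfl
  have hsymm : ∀ (x : veroneseSubring 𝒜 F) (y : AddMonoidAlgebra (𝒜 0) F),
      E.symm x = y ↔ x = E y := fun x y =>
    ⟨fun h => by rw [← h, RingEquiv.apply_symm_apply],
     fun h => by rw [h, RingEquiv.symm_apply_apply]⟩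
  refine ⟨F, hFfin, hFfree, E.symm, ?_, ?_⟩
  · intro a ha
    rw [hsymm]
    apply Subtype.ext
    rw [hEapp, hψs, huzero, Units.val_one, mul_one]
  · intro d hd s
    constructor
    · intro hs
      set z : F := ⟨d, hd⟩ with hzdef
      have hainv : (((u z)⁻¹ : Sˣ) : S) ∈ 𝒜 (-d) :=
        aux_units_inv_mem_neg 𝒜 (u z) (humem z)
      have ha : (s : S) * (((u z)⁻¹ : Sˣ) : S) ∈ 𝒜 0 := by
        have h6 := SetLike.mul_mem_graded hs hainv
        rwa [add_neg_cancel] at h6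
      refine ⟨⟨_, ha⟩, ?_⟩
      rw [hsymm]
      apply Subtype.ext
      rw [hEapp, hψs]
      show (s : S) = ((s : S) * (((u z)⁻¹ : Sˣ) : S)) * ((u z : Sˣ) : S)
      rw [mul_assoc, Units.inv_mul, mul_one]
    · rintro ⟨a, hea⟩
      have h7 : s = ψ (AddMonoidAlgebra.single (⟨d, hd⟩ : F) a) := by
        have h8 := (hsymm _ _).mp hea
        rw [h8, hEapp]
      have h9 : (s : S) = (a : S) * ((u (⟨d, hd⟩ : F) : Sˣ) : S) := by
        rw [h7]; exact hψs _ _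
      rw [h9]
      have h10 := SetLike.mul_mem_graded a.2 (humem (⟨d, hd⟩ : F))
      rwa [zero_add] at h10
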